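/- Let ε ∈ (0, exp(-2)), G an abelian group, and A a non-empty finite distributional ε-approximate group in G. Then ΔH(A) := H(U_A + U_A) - H(U_A) ≤ 2ε log(ε⁻¹|A|). -/

import Mathlib

open Real
open scoped Pointwise symmDiff

/-- Shannon entropy of a (finitely supported) distribution, natural log,
with the convention `0 * log 0 = 0`. -/
noncomputable def entropy {α : Type*} (p : α → ℝ) : ℝ :=
  -∑ᶠ x, p x * Real.log (p x)

/-- `p` is a finitely supported probability mass function. -/
def IsPMF {α : Type*} (p : α → ℝ) : Prop :=
  (∀ x, 0 ≤ p x) ∧ (Function.support p).Finite ∧ ∑ᶠ x, p x = 1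

/-- Distribution of `X + Y` for independent `X ~ p`, `Y ~ q`. -/
noncomputable def conv {G : Type*} [AddCommGroup G] (p q : G → ℝ) : G → ℝ :=
  fun z => ∑ᶠ x, p x * q (z - x)

/-- The uniform distribution on a set `A`. -/
noncomputable def uniformSet {G : Type*} (A : Set G) : G → ℝ :=
  A.indicator fun _ => 1 / A.ncard

/-- Entropic Ruzsa distance between two distributions. -/
noncomputable def rdist {G : Type*} [AddCommGroup G] (p q : G → ℝ) : ℝ :=
  entropy (conv p q) - (entropy p + entropy q) / 2

/-- Probability of an event under distribution `p`. -/
noncomputable def probOf {α : Type*} (p : α → ℝ) (S : Set α) : ℝ :=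
  ∑ᶠ x ∈ S, p x

/-- `A` is a distributional ε-approximate group. -/
def IsDistribApproxGroup {G : Type*} [AddCommGroup G] (ε : ℝ) (A : Set G) : Prop :=
  ∃ U : Set G, U.ncard = A.ncard ∧
    (1 - ε) * (A.ncard : ℝ) ^ 2 ≤
      ({p : G × G | p.1 ∈ A ∧ p.2 ∈ A ∧ p.1 + p.2 ∈ U}.ncard : ℝ)

lemma aux_log_nat_le {m k : ℕ} (h : m ≤ k) (hk : 1 ≤ k) :
    Real.log (m : ℝ) ≤ Real.log (k : ℝ) := by
  rcases Nat.eq_zero_or_pos m with hm | hm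
  · subst hm
    simpa using Real.log_nonneg (by exact_mod_cast hk)
  · exact Real.log_le_log (by exact_mod_cast hm) (by exact_mod_cast h)

lemma aux_jensen_piece {G : Type*} (S : Finset G) (f : G → ℝ) (hf : ∀ z ∈ S, 0 ≤ f z) :
    -∑ z ∈ S, f z * Real.log (f z) ≤
      (∑ z ∈ S, f z) * Real.log (S.card : ℝ) -
        (∑ z ∈ S, f z) * Real.log (∑ z ∈ S, f z) := by
  classical
  set Q := ∑ z ∈ S, f z with hQdef
  have hQ0 : 0 ≤ Q := Finset.sum_nonneg hf
  rcases eq_or_lt_of_le hQ0 with h0 | hQpos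
  · have hall : ∀ z ∈ S, f z = 0 :=
      (Finset.sum_eq_zero_iff_of_nonneg hf).1 h0.symm
    have h1 : ∑ z ∈ S, f z * Real.log (f z) = 0 :=
      Finset.sum_eq_zero (fun z hz => by rw [hall z hz]; ring)
    rw [h1, ← h0]
    simp
  · set S' := S.filter (fun z => f z ≠ 0) with hS'def
    have hsub : S' ⊆ S := Finset.filter_subset _ _
    have hQ' : ∑ z ∈ S', f z = Q := Finset.sum_filter_ne_zero S
    have hpos : ∀ z ∈ S', 0 < f z := fun z hz =>
      lt_of_le_of_ne (hf z (hsub hz)) (Ne.symm (Finset.mem_filter.1 hz).2)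
    have hsum_eq : ∑ z ∈ S', f z * Real.log (f z) = ∑ z ∈ S, f z * Real.log (f z) :=
      Finset.sum_filter_of_ne (fun z _ h => fun hfz => by simp [hfz] at h)
    have hne' : S'.Nonempty := by
      rw [Finset.nonempty_iff_ne_empty]
      intro h
      rw [h, Finset.sum_empty] at hQ'
      exact hQpos.ne hQ'
    have hcard' : 0 < S'.card := Finset.card_pos.2 hne'
    have hj := (strictConcaveOn_log_Ioi.concaveOn).le_map_sum (t := S')
      (w := fun z => f z / Q) (p := fun z => (f z)⁻¹)
      (fun z hz => div_nonneg (hf z (hsub hz)) hQ0)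
      (by rw [← Finset.sum_div, hQ', div_self hQpos.ne'])
      (fun z hz => Set.mem_Ioi.2 (inv_pos.2 (hpos z hz)))
    have hL : ∑ z ∈ S', (f z / Q) • Real.log ((f z)⁻¹)
        = -(∑ z ∈ S', f z * Real.log (f z)) / Q := by
      calc ∑ z ∈ S', (f z / Q) • Real.log ((f z)⁻¹)
          = ∑ z ∈ S', -(f z * Real.log (f z)) / Q := by
            refine Finset.sum_congr rfl (fun z hz => ?_)
            rw [smul_eq_mul, Real.log_inv]
            ring
        _ = -(∑ z ∈ S', f z * Real.log (f z)) / Q := by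
            rw [← Finset.sum_div, Finset.sum_neg_distrib]
    have hR : ∑ z ∈ S', (f z / Q) • ((f z)⁻¹) = (S'.card : ℝ) / Q := by
      calc ∑ z ∈ S', (f z / Q) • ((f z)⁻¹)
          = ∑ z ∈ S', 1 / Q := by
            refine Finset.sum_congr rfl (fun z hz => ?_)
            rw [smul_eq_mul, div_mul_eq_mul_div, mul_inv_cancel₀ (hpos z hz).ne']
        _ = (S'.card : ℝ) / Q := by
            rw [Finset.sum_const, nsmul_eq_mul]
            ring
    rw [hL, hR] at hj
    have hj2 : -(∑ z ∈ S', f z * Real.log (f z))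
        ≤ Q * Real.log ((S'.card : ℝ) / Q) := by
      rw [div_le_iff₀ hQpos] at hj
      linarith [hj]
    rw [Real.log_div (by exact_mod_cast hcard'.ne') hQpos.ne'] at hj2
    have hlogle : Real.log (S'.card : ℝ) ≤ Real.log (S.card : ℝ) :=
      aux_log_nat_le (Finset.card_le_card hsub) (hcard'.trans_le (Finset.card_le_card hsub))
    rw [← hsum_eq]
    nlinarith [mul_le_mul_of_nonneg_left hlogle hQ0]

set_option maxHeartbeats 1600000 in
theorem deltaH_le_of_approx_group {G : Type*} [AddCommGroup G]
    (ε : ℝ) (hε : 0 < ε) (hε' : ε < Real.exp (-2))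
    (A : Set G) (hfin : A.Finite) (hne : A.Nonempty)
    (happrox : IsDistribApproxGroup ε A) :
    entropy (conv (uniformSet A) (uniformSet A)) - entropy (uniformSet A)
      ≤ 2 * ε * Real.log (ε⁻¹ * A.ncard) := by
  classical
  obtain ⟨U, hUcard, hUineq⟩ := happrox
  set n := A.ncard with hn_def
  have hn : 0 < n := (Set.ncard_pos hfin).2 hne
  have hn1 : (1:ℝ) ≤ (n:ℝ) := by exact_mod_cast hn
  have hnR : (0:ℝ) < (n:ℝ) := by exact_mod_cast hn
  set A' : Finset G := hfin.toFinset with hA'def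
  have hA'card : A'.card = n := (Set.ncard_eq_toFinset_card A hfin).symm
  have hmemA' : ∀ x : G, x ∈ A' ↔ x ∈ A := fun x => hfin.mem_toFinset
  set p := uniformSet A with hpdef
  have hpval : ∀ x ∈ A, p x = (n:ℝ)⁻¹ := fun x hx => by
    simp [hpdef, uniformSet, Set.indicator_of_mem hx, one_div]
    rfl
  have hpval' : ∀ x, x ∉ A → p x = 0 := fun x hx => by
    simp [hpdef, uniformSet, Set.indicator_of_notMem hx]
  have hp_ne : ∀ x, p x ≠ 0 → x ∈ A := fun x hx => by
    by_contra h; exact hx (hpval' x h)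
  -- entropy of the uniform distribution
  have hHp : entropy p = Real.log (n:ℝ) := by
    have hsupp2 : Function.support (fun x => p x * Real.log (p x)) ⊆ ↑A' := by
      intro x hx
      rw [Function.mem_support] at hx
      have hx' : p x ≠ 0 := fun h => hx (by rw [h]; simp)
      exact (hmemA' x).2 (hp_ne x hx')
    rw [show entropy p = -∑ᶠ x, p x * Real.log (p x) from rfl,
      finsum_eq_sum_of_support_subset _ hsupp2]
    have h1 : ∑ x ∈ A', p x * Real.log (p x)
        = ∑ x ∈ A', (n:ℝ)⁻¹ * Real.log ((n:ℝ)⁻¹) :=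
      Finset.sum_congr rfl fun x hx => by rw [hpval x ((hmemA' x).1 hx)]
    rw [h1, Finset.sum_const, hA'card, nsmul_eq_mul, Real.log_inv]
    field_simp
  -- values of the convolution
  set r : G → ℕ := fun z => (A'.filter (fun x => z - x ∈ A')).card with hrdef
  have hsval : ∀ z, conv p p z = (r z : ℝ) / (n:ℝ)^2 := by
    intro z
    have hsupp : Function.support (fun x => p x * p (z - x)) ⊆ ↑A' := by
      intro x hx
      rw [Function.mem_support] at hx
      have hx' : p x ≠ 0 := fun h => hx (by rw [h]; simp)
      exact (hmemA' x).2 (hp_ne x hx')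
    rw [show conv p p z = ∑ᶠ x, p x * p (z - x) from rfl,
      finsum_eq_sum_of_support_subset _ hsupp]
    calc ∑ x ∈ A', p x * p (z - x)
        = ∑ x ∈ A', (if z - x ∈ A' then (n:ℝ)⁻¹ * (n:ℝ)⁻¹ else 0) := by
          refine Finset.sum_congr rfl fun x hx => ?_
          rw [hpval x ((hmemA' x).1 hx)]
          by_cases h : z - x ∈ A'
          · rw [if_pos h, hpval _ ((hmemA' _).1 h)]
          · rw [if_neg h, hpval' _ (fun hh => h ((hmemA' _).2 hh)), mul_zero]
      _ = (r z : ℝ) / (n:ℝ)^2 := by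
          rw [← Finset.sum_filter, Finset.sum_const, nsmul_eq_mul]
          rw [sq]
          field_simp
          rfl
  have hs_nonneg : ∀ z, 0 ≤ conv p p z := fun z => by rw [hsval]; positivity
  set B := A' + A' with hBdef
  have hs_supp : ∀ z, conv p p z ≠ 0 → z ∈ B := by
    intro z hz
    rw [hsval] at hz
    have hr : r z ≠ 0 := fun h => hz (by rw [h]; simp)
    obtain ⟨x, hx⟩ := Finset.card_pos.1 (Nat.pos_of_ne_zero hr)
    rw [Finset.mem_filter] at hx
    have hzx : z = x + (z - x) := by abel
    rw [hzx]
    exact Finset.add_mem_add hx.1 hx.2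
  -- fibers of the addition map
  have hfiber : ∀ z : G, ((A' ×ˢ A').filter (fun q => q.1 + q.2 = z)).card = r z := by
    intro z
    refine Finset.card_nbij' (i := fun q => q.1) (j := fun x => (x, z - x)) ?_ ?_ ?_ ?_
    · intro q hq
      rw [Finset.mem_coe, Finset.mem_filter, Finset.mem_product] at hq
      rw [Finset.mem_coe, Finset.mem_filter]
      refine ⟨hq.1.1, ?_⟩
      rw [← hq.2]
      simpa using hq.1.2
    · intro x hx
      rw [Finset.mem_coe, Finset.mem_filter] at hx
      rw [Finset.mem_coe, Finset.mem_filter, Finset.mem_product]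
      exact ⟨⟨hx.1, hx.2⟩, by rw [add_comm, sub_add_cancel]⟩
    · intro q hq
      rw [Finset.mem_coe, Finset.mem_filter] at hq
      have h2 : z - q.1 = q.2 := by rw [← hq.2]; abel
      simp only [h2]
    · intro x hx
      rfl
  have hsum_r : ∑ z ∈ B, r z = n * n := by
    have hmap : ∀ q ∈ A' ×ˢ A', (fun q : G × G => q.1 + q.2) q ∈ B := by
      intro q hq
      rw [Finset.mem_product] at hq
      exact Finset.add_mem_add hq.1 hq.2
    have h1 := Finset.card_eq_sum_card_fiberwise hmap
    rw [Finset.card_product, hA'card] at h1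
    calc ∑ z ∈ B, r z = ∑ z ∈ B, ((A' ×ˢ A').filter (fun q => q.1 + q.2 = z)).card :=
          Finset.sum_congr rfl fun z _ => (hfiber z).symm
      _ = n * n := h1.symm
  have hsum_s : ∑ z ∈ B, conv p p z = 1 := by
    calc ∑ z ∈ B, conv p p z = ∑ z ∈ B, (r z : ℝ) / (n:ℝ)^2 :=
          Finset.sum_congr rfl fun z _ => hsval z
      _ = (∑ z ∈ B, (r z : ℝ)) / (n:ℝ)^2 := by rw [Finset.sum_div]
      _ = 1 := by
          rw [← Nat.cast_sum, hsum_r]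
          push_cast
          rw [sq]
          field_simp
  -- entropy of the convolution as a finite sum
  have hHs : entropy (conv p p) = -∑ z ∈ B, conv p p z * Real.log (conv p p z) := by
    rw [show entropy (conv p p) = -∑ᶠ z, conv p p z * Real.log (conv p p z) from rfl]
    congr 1
    apply finsum_eq_sum_of_support_subset
    intro z hz
    rw [Function.mem_support] at hz
    exact hs_supp z (fun h => hz (by rw [h]; simp))
  -- the approximating set U
  have hUfin : U.Finite := by
    by_contra h
    have h0 : U.ncard = 0 := Set.Infinite.ncard h
    rw [hUcard] at h0
    omega
  have hU'card : hUfin.toFinset.card = n := by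
    rw [← Set.ncard_eq_toFinset_card U hUfin, hUcard]
  set t := B.filter (fun z => z ∈ U) with htdef
  have htB : t ⊆ B := Finset.filter_subset _ _
  have htcard : t.card ≤ n := by
    have hsub : t ⊆ hUfin.toFinset := fun z hz =>
      (hUfin.mem_toFinset).2 (Finset.mem_filter.1 hz).2
    exact (Finset.card_le_card hsub).trans_eq hU'card
  -- pair counting
  set Pf := (A' ×ˢ A').filter (fun q => q.1 + q.2 ∈ U) with hPfdef
  have hPset : {q : G × G | q.1 ∈ A ∧ q.2 ∈ A ∧ q.1 + q.2 ∈ U} = ↑Pf := by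
    ext q
    simp only [Set.mem_setOf_eq, hPfdef, Finset.coe_filter, Finset.mem_product, hmemA']
    tauto
  have hPcard : Pf.card = ∑ z ∈ t, r z := by
    have hmap : ∀ q ∈ Pf, (fun q : G × G => q.1 + q.2) q ∈ t := by
      intro q hq
      rw [hPfdef, Finset.mem_filter, Finset.mem_product] at hq
      rw [htdef, Finset.mem_filter]
      exact ⟨Finset.add_mem_add hq.1.1 hq.1.2, hq.2⟩
    rw [Finset.card_eq_sum_card_fiberwise hmap]
    refine Finset.sum_congr rfl fun z hz => ?_
    rw [← hfiber z]
    congr 1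
    ext q
    simp only [hPfdef, Finset.mem_filter, Finset.mem_product]
    have hzU : z ∈ U := (Finset.mem_filter.1 hz).2
    constructor
    · rintro ⟨⟨h1, _⟩, h2⟩
      exact ⟨h1, h2⟩
    · rintro ⟨⟨h1, h2⟩, h3⟩
      exact ⟨⟨⟨h1, h2⟩, h3 ▸ hzU⟩, h3⟩
  have hineq2 : (1 - ε) * (n:ℝ)^2 ≤ ∑ z ∈ t, (r z : ℝ) := by
    have h := hUineq
    rw [hPset, Set.ncard_coe_finset, hPcard] at h
    calc (1 - ε) * (n:ℝ)^2 ≤ ((∑ z ∈ t, r z : ℕ) : ℝ) := h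
      _ = ∑ z ∈ t, (r z : ℝ) := by push_cast; rfl
  -- mass on t and off t
  set q0 := ∑ z ∈ t, conv p p z with hq0def
  have hq0_eq : q0 = (∑ z ∈ t, (r z : ℝ)) / (n:ℝ)^2 := by
    calc q0 = ∑ z ∈ t, (r z : ℝ) / (n:ℝ)^2 :=
          Finset.sum_congr rfl fun z _ => hsval z
      _ = (∑ z ∈ t, (r z : ℝ)) / (n:ℝ)^2 := by rw [Finset.sum_div]
  have hq0_ge : 1 - ε ≤ q0 := by
    rw [hq0_eq, le_div_iff₀ (by positivity)]
    linarith [hineq2]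
  have hq0_nonneg : 0 ≤ q0 := Finset.sum_nonneg fun z _ => hs_nonneg z
  have hq0_le1 : q0 ≤ 1 := by
    rw [← hsum_s]
    exact Finset.sum_le_sum_of_subset_of_nonneg htB fun z _ _ => hs_nonneg z
  set δ := 1 - q0 with hδdef
  have hδ0 : 0 ≤ δ := by simp only [hδdef]; linarith
  have hδε : δ ≤ ε := by simp only [hδdef]; linarith
  have hsum_t' : ∑ z ∈ B \ t, conv p p z = δ := by
    have h := Finset.sum_sdiff (f := fun z => conv p p z) htB
    rw [hsum_s] at h
    simp only [hδdef, hq0def]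
    linarith [h]
  have ht'card : (B \ t).card ≤ n * n := by
    calc (B \ t).card ≤ B.card := Finset.card_le_card Finset.sdiff_subset
      _ ≤ A'.card * A'.card := Finset.card_add_le
      _ = n * n := by rw [hA'card]
  -- Jensen on each piece
  have hJ1 := aux_jensen_piece t (fun z => conv p p z) (fun z _ => hs_nonneg z)
  have hJ2 := aux_jensen_piece (B \ t) (fun z => conv p p z) (fun z _ => hs_nonneg z)
  rw [← hq0def] at hJ1
  rw [hsum_t'] at hJ2
  have hlog1 : Real.log (t.card : ℝ) ≤ Real.log (n:ℝ) := aux_log_nat_le htcard hn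
  have hlog2 : Real.log ((B \ t).card : ℝ) ≤ 2 * Real.log (n:ℝ) := by
    have h := aux_log_nat_le ht'card (by nlinarith [hn] : 1 ≤ n * n)
    calc Real.log ((B \ t).card : ℝ) ≤ Real.log ((n * n : ℕ) : ℝ) := h
      _ = 2 * Real.log (n:ℝ) := by
          push_cast
          rw [Real.log_mul hnR.ne' hnR.ne']
          ring
  have hsplit : entropy (conv p p)
      = -∑ z ∈ t, conv p p z * Real.log (conv p p z)
        + -∑ z ∈ B \ t, conv p p z * Real.log (conv p p z) := by
    rw [hHs, ← Finset.sum_sdiff htB]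
    ring
  have hfinal : entropy (conv p p) - entropy p
      ≤ δ * Real.log (n:ℝ) - (1 - δ) * Real.log (1 - δ) - δ * Real.log δ := by
    rw [hsplit, hHp]
    have e1 : -∑ z ∈ t, conv p p z * Real.log (conv p p z)
        ≤ q0 * Real.log (n:ℝ) - q0 * Real.log q0 := by
      refine hJ1.trans ?_
      have h := mul_le_mul_of_nonneg_left hlog1 hq0_nonneg
      linarith
    have e2 : -∑ z ∈ B \ t, conv p p z * Real.log (conv p p z)
        ≤ δ * (2 * Real.log (n:ℝ)) - δ * Real.log δ := by
      refine hJ2.trans ?_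
      have h := mul_le_mul_of_nonneg_left hlog2 hδ0
      linarith
    have hq0δ : q0 = 1 - δ := by simp only [hδdef]; ring
    rw [hq0δ] at e1
    linarith [e1, e2]
  -- final numeric estimates
  have hε1 : ε < 1 := lt_trans hε' (Real.exp_lt_one_iff.2 (by norm_num))
  have h1δ : 0 < 1 - δ := by linarith
  have hb : -((1 - δ) * Real.log (1 - δ)) ≤ δ := by
    have h := Real.log_le_sub_one_of_pos (inv_pos.2 h1δ)
    rw [Real.log_inv] at h
    have h2 := mul_le_mul_of_nonneg_left h h1δ.le
    have h3 : (1 - δ) * (1 - δ)⁻¹ = 1 := mul_inv_cancel₀ h1δ.ne'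
    nlinarith [h2, h3]
  have hc : -(δ * Real.log δ) ≤ ε - δ - δ * Real.log ε := by
    rcases eq_or_lt_of_le hδ0 with h0 | hδpos
    · rw [← h0]
      simp
      linarith
    · have h := Real.log_le_sub_one_of_pos (div_pos hε hδpos)
      rw [Real.log_div hε.ne' hδpos.ne'] at h
      have h2 := mul_le_mul_of_nonneg_left h hδpos.le
      have h3 : δ * (ε / δ) = ε := by field_simp
      nlinarith [h2, h3]
  have hLε : Real.log ε < -2 := by
    have h := Real.log_lt_log hε hε'
    rwa [Real.log_exp] at h
  have hlogn : 0 ≤ Real.log (n:ℝ) := Real.log_nonneg hn1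
  have hRHS : Real.log (ε⁻¹ * (n:ℝ)) = -Real.log ε + Real.log (n:ℝ) := by
    rw [Real.log_mul (inv_ne_zero hε.ne') hnR.ne', Real.log_inv]
  rw [hRHS]
  refine hfinal.trans ?_
  nlinarith [hb, hc, mul_nonneg (sub_nonneg.2 hδε) hlogn,
    mul_nonneg (sub_nonneg.2 hδε) (by linarith : (0:ℝ) ≤ -Real.log ε),
    mul_nonneg hε.le (by linarith : (0:ℝ) ≤ -Real.log ε - 1),
    mul_nonneg hε.le hlogn]
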